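/- Let π be a Frobenius injective group equipped with the action of π × π on π given by (a, b)·γ = a γ b⁻¹, and let S ⊆ π be a finite nonempty subset. Then the setwise stabilizer of S equals the pointwise stabilizer: {(a, b) ∈ π × π : aSb⁻¹ = S} = ⋂_{γ ∈ S} {(a, b) ∈ π × π : a γ b⁻¹ = γ}. -/
import Mathlib


/-- For a Frobenius injective group π with the action of π × π on π given by
`(a, b)·γ = a * γ * b⁻¹`, the setwise stabilizer of a finite nonempty subset `S`
equals the pointwise stabilizer. -/
theorem frobenius_injective_setwise_eq_pointwise_stabilizer {π : Type*} [Group π]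
    (hFI : ∀ k : ℕ, 1 ≤ k → Function.Injective (fun x : π => x ^ k))
    (S : Finset π) (hS : S.Nonempty) :
    {p : π × π | (fun γ : π => p.1 * γ * p.2⁻¹) '' (S : Set π) = (S : Set π)} =
      ⋂ γ ∈ (S : Set π), {p : π × π | p.1 * γ * p.2⁻¹ = γ} := by
  ext ⟨a, b⟩
  simp only [Set.mem_setOf_eq, Set.mem_iInter]
  constructor
  · intro h γ hγ
    -- the sequence k ↦ a^k * γ * b⁻ᵏ stays in S
    have hmem : ∀ k : ℕ, a ^ k * γ * (b ^ k)⁻¹ ∈ S := by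
      intro k
      induction k with
      | zero => simpa using hγ
      | succ n ih =>
        have : a * (a ^ n * γ * (b ^ n)⁻¹) * b⁻¹ ∈ (S : Set π) := by
          rw [← h]
          exact Set.mem_image_of_mem _ (by exact_mod_cast ih)
        have heq : a * (a ^ n * γ * (b ^ n)⁻¹) * b⁻¹
            = a ^ (n + 1) * γ * (b ^ (n + 1))⁻¹ := by
          rw [pow_succ, pow_succ']
          group
        rw [heq] at this
        exact_mod_cast this
    -- the sequence repeats
    have hfin : ∃ i j : ℕ, i ≠ j ∧
        (⟨a ^ i * γ * (b ^ i)⁻¹, hmem i⟩ : {x // x ∈ S}) = ⟨a ^ j * γ * (b ^ j)⁻¹, hmem j⟩ :=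
      Finite.exists_ne_map_eq_of_infinite (fun k : ℕ => (⟨_, hmem k⟩ : {x // x ∈ S}))
    obtain ⟨i, j, hij, heq⟩ := hfin
    have heq' : a ^ i * γ * (b ^ i)⁻¹ = a ^ j * γ * (b ^ j)⁻¹ := congrArg Subtype.val heq
    clear heq
    -- WLOG i < j
    wlog hlt : i < j generalizing i j
    · exact this j i hij.symm heq'.symm (by omega)
    -- derive a^(j-i) = (γ b γ⁻¹)^(j-i)
    set m := j - i with hm
    have hm1 : 1 ≤ m := by omega
    have hji : j = i + m := by omega
    have key : a ^ m = (γ * b * γ⁻¹) ^ m := by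
      have h1 : a ^ i * (a ^ m * γ * (b ^ m)⁻¹) * (b ^ i)⁻¹ = a ^ i * γ * (b ^ i)⁻¹ := by
        rw [heq', hji, pow_add, pow_add]
        group
      have h2 : a ^ m * γ * (b ^ m)⁻¹ = γ := by
        have := mul_left_cancel (mul_right_cancel h1)
        exact this
      have h3 : a ^ m * γ = γ * b ^ m := mul_inv_eq_iff_eq_mul.mp h2
      rw [conj_pow, ← h3]
      group
    have := hFI m hm1 key
    -- a = γ b γ⁻¹ ⇒ a γ b⁻¹ = γ
    rw [this]
    group
  · intro h
    ext x
    constructor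
    · rintro ⟨γ, hγ, rfl⟩
      show a * γ * b⁻¹ ∈ (S : Set π)
      rw [h γ hγ]; exact hγ
    · intro hx
      exact ⟨x, hx, h x hx⟩
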